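/- Let (X,φ) be a compact metric flow without fixed points. For any η > 0 there exists θ > 0 such that for all x, y ∈ X, any closed interval I containing 0, and any reparametrization α ∈ Rep(I): if d(φ_{α(s)}x, φ_s y) < θ for all s ∈ I, then |α(s) − s| < η|s| for all s ∈ I with |s| > 1, and |α(s) − s| < η for all s ∈ I with |s| ≤ 1. -/

import Mathlib

open Set Filter Topology MeasureTheory ENNReal NNReal

variable {X : Type*}

def IsFlow [TopologicalSpace X] (φ : ℝ → X → X) : Prop :=
  Continuous (fun p : X × ℝ => φ p.2 p.1) ∧ (∀ x, φ 0 x = x) ∧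
    ∀ s t : ℝ, ∀ x : X, φ (s + t) x = φ s (φ t x)

def FixedPointFree (φ : ℝ → X → X) : Prop := ∀ x : X, ∃ t : ℝ, φ t x ≠ x

/-- A reparametrization on an interval `I` containing `0`: a continuous injective map
(hence a homeomorphism onto its image) with `α 0 = 0`. -/
def IsRepOn (I : Set ℝ) (α : ℝ → ℝ) : Prop :=
  ContinuousOn α I ∧ Set.InjOn α I ∧ α 0 = 0

def IsRep (t : ℝ) (α : ℝ → ℝ) : Prop := IsRepOn (Set.Icc 0 t) α

/-- Open reparametrization ball `B(x,t,ε,φ)`. -/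
def repBall [MetricSpace X] (φ : ℝ → X → X) (x : X) (t ε : ℝ) : Set X :=
  {y | ∃ α : ℝ → ℝ, IsRep t α ∧ ∀ s ∈ Set.Icc 0 t, dist (φ (α s) x) (φ s y) < ε}

/-- Closed reparametrization ball `B̄(x,t,ε,φ)`. -/
def repBallCl [MetricSpace X] (φ : ℝ → X → X) (x : X) (t ε : ℝ) : Set X :=
  {y | ∃ α : ℝ → ℝ, IsRep t α ∧ ∀ s ∈ Set.Icc 0 t, dist (φ (α s) x) (φ s y) ≤ ε}

/-- A (finite or countable) packing family: pairwise disjoint closed reparametrization balls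
with centers in `Z` and times at least `N`. -/
def IsPackingFamily [MetricSpace X] (φ : ℝ → X → X) (Z : Set X) (ε : ℝ) (N : ℕ)
    (I : Set ℕ) (x : ℕ → X) (t : ℕ → ℝ) : Prop :=
  (∀ i ∈ I, x i ∈ Z ∧ (N : ℝ) ≤ t i) ∧
    ∀ i ∈ I, ∀ j ∈ I, i ≠ j →
      Disjoint (repBallCl φ (x i) (t i) ε) (repBallCl φ (x j) (t j) ε)

/-- `P^s_{N,ε}(φ,Z)`. -/
noncomputable def packPre [MetricSpace X] (φ : ℝ → X → X) (Z : Set X) (s ε : ℝ) (N : ℕ) :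
    ℝ≥0∞ :=
  ⨆ (x : ℕ → X) (t : ℕ → ℝ) (I : Set ℕ) (_ : IsPackingFamily φ Z ε N I x t),
    ∑' i : I, ENNReal.ofReal (Real.exp (-(s * t i)))

/-- `P^s_ε(φ,Z) = lim_{N→∞} P^s_{N,ε}(φ,Z)` (the limit of a non-increasing sequence). -/
noncomputable def packP [MetricSpace X] (φ : ℝ → X → X) (Z : Set X) (s ε : ℝ) : ℝ≥0∞ :=
  ⨅ N : ℕ, packPre φ Z s ε N

/-- `𝒫^s_ε(Z)`. -/
noncomputable def packM [MetricSpace X] (φ : ℝ → X → X) (Z : Set X) (s ε : ℝ) : ℝ≥0∞ :=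
  ⨅ (Zs : ℕ → Set X) (_ : Z ⊆ ⋃ i, Zs i), ∑' i, packP φ (Zs i) s ε

/-- `h^P_top(φ,Z,ε) = inf{s ≥ 0 : 𝒫^s_ε(Z) = 0}`. -/
noncomputable def packEnt [MetricSpace X] (φ : ℝ → X → X) (Z : Set X) (ε : ℝ) : ℝ≥0∞ :=
  sInf (ENNReal.ofReal '' {s : ℝ | 0 ≤ s ∧ packM φ Z s ε = 0})

/-- `h^P_top(φ,Z) = lim_{ε→0} h^P_top(φ,Z,ε)` (the limit is the supremum by monotonicity). -/
noncomputable def packEntTop [MetricSpace X] (φ : ℝ → X → X) (Z : Set X) : ℝ≥0∞ :=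
  ⨆ (ε : ℝ) (_ : 0 < ε), packEnt φ Z ε

/-- The canonical map `EReal → ℝ≥0∞` (sending negatives to `0` and `⊤` to `⊤`). -/
noncomputable def erealToENNReal (x : EReal) : ℝ≥0∞ :=
  if x = ⊤ then ⊤ else ENNReal.ofReal x.toReal

/-- `limsup_{t→∞} −(1/t) log μ(B(x,t,ε,φ))`, as an extended nonnegative real. -/
noncomputable def upLocalEntAt [MetricSpace X] [MeasurableSpace X] (φ : ℝ → X → X) (μ : Measure X) (x : X)
    (ε : ℝ) : ℝ≥0∞ :=
  erealToENNReal (Filter.limsup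
    (fun t : ℝ => ((t⁻¹ : ℝ) : EReal) * (-(ENNReal.log (μ (repBall φ x t ε)))))
    Filter.atTop)

/-- The upper local entropy `h̄_μ(φ,x)`; the limit as `ε → 0` is the supremum over `ε > 0`
by monotonicity. -/
noncomputable def upLocalEnt [MetricSpace X] [MeasurableSpace X] (φ : ℝ → X → X) (μ : Measure X) (x : X) :
    ℝ≥0∞ :=
  ⨆ (ε : ℝ) (_ : 0 < ε), upLocalEntAt φ μ x ε

/-- The upper local entropy `h̄_μ(φ) = ∫ h̄_μ(φ,x) dμ(x)`. -/
noncomputable def upEnt [MetricSpace X] [MeasurableSpace X] (φ : ℝ → X → X) (μ : Measure X) : ℝ≥0∞ :=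
  ∫⁻ x, upLocalEnt φ μ x ∂μ

/-- `ℳ^s_{N,ε}(φ,Z)` for Bowen entropy. -/
noncomputable def bowenPre [MetricSpace X] (φ : ℝ → X → X) (Z : Set X) (s ε : ℝ) (N : ℕ) :
    ℝ≥0∞ :=
  ⨅ (x : ℕ → X) (t : ℕ → ℝ)
    (_ : (∀ i, (N : ℝ) ≤ t i) ∧ Z ⊆ ⋃ i, repBall φ (x i) (t i) ε),
    ∑' i, ENNReal.ofReal (Real.exp (-(s * t i)))

/-- `ℳ^s_ε(φ,Z) = lim_{N→∞} ℳ^s_{N,ε}(φ,Z)` (a non-decreasing limit). -/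
noncomputable def bowenMeps [MetricSpace X] (φ : ℝ → X → X) (Z : Set X) (s ε : ℝ) : ℝ≥0∞ :=
  ⨆ N : ℕ, bowenPre φ Z s ε N

/-- `ℳ^s(φ,Z) = lim_{ε→0} ℳ^s_ε(φ,Z)` (a non-decreasing limit as `ε` decreases). -/
noncomputable def bowenM [MetricSpace X] (φ : ℝ → X → X) (Z : Set X) (s : ℝ) : ℝ≥0∞ :=
  ⨆ (ε : ℝ) (_ : 0 < ε), bowenMeps φ Z s ε

/-- The Bowen topological entropy `h^B_top(φ,Z)`. -/
noncomputable def bowenEnt [MetricSpace X] (φ : ℝ → X → X) (Z : Set X) : ℝ≥0∞ :=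
  sInf (ENNReal.ofReal '' {s : ℝ | 0 ≤ s ∧ bowenM φ Z s = 0})

lemma flow_int_mul [TopologicalSpace X] {φ : ℝ → X → X} (hφ : IsFlow φ) {x : X} {t : ℝ}
    (h : φ t x = x) : ∀ k : ℤ, φ ((k : ℝ) * t) x = x := by
  have hneg : φ (-t) x = x := by
    have h2 := hφ.2.2 (-t) t x
    rw [h] at h2
    simpa [hφ.2.1] using h2.symm
  intro k
  induction k using Int.induction_on with
  | zero => simpa using hφ.2.1 x
  | succ k ih =>
      have e : ((k : ℝ) + 1) * t = t + (k : ℝ) * t := by ring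
      push_cast
      rw [e, hφ.2.2]
      push_cast at ih
      rw [ih, h]
  | pred k ih =>
      have e : (-(k : ℝ) - 1) * t = -t + (-(k : ℝ)) * t := by ring
      push_cast
      rw [e, hφ.2.2]
      push_cast at ih
      rw [ih, hneg]

lemma exists_no_small_period [MetricSpace X] [CompactSpace X]
    {φ : ℝ → X → X} (hφ : IsFlow φ) (hfpf : FixedPointFree φ) :
    ∃ t₀ > 0, ∀ x : X, ∀ t : ℝ, t ≠ 0 → |t| ≤ t₀ → φ t x ≠ x := by
  by_contra hcon
  push_neg at hcon
  choose x t ht0 htle hper using fun n : ℕ => hcon (1 / (n + 1)) (by positivity)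
  obtain ⟨a, -, k, hk, hka⟩ := isCompact_univ.tendsto_subseq (x := fun n => x n)
    (fun n => mem_univ _)
  obtain ⟨s, hs⟩ := hfpf a
  apply hs
  set r : ℕ → ℝ := fun n => s - t n * ⌊s / t n⌋ with hr
  have hrs : ∀ n, φ (r n) (x n) = φ s (x n) := by
    intro n
    have hmul : φ ((⌊s / t n⌋ : ℝ) * t n) (x n) = x n := flow_int_mul hφ (hper n) _
    have e : s = r n + (⌊s / t n⌋ : ℝ) * t n := by simp [hr]; ring
    calc φ (r n) (x n) = φ (r n) (φ ((⌊s / t n⌋ : ℝ) * t n) (x n)) := by rw [hmul]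
    _ = φ (r n + (⌊s / t n⌋ : ℝ) * t n) (x n) := (hφ.2.2 _ _ _).symm
    _ = φ s (x n) := by rw [← e]
  have hrbound : ∀ n, |r n| ≤ 1 / (n + 1) := by
    intro n
    have h1 : r n = t n * (s / t n - ⌊s / t n⌋) := by
      rw [mul_sub, mul_div_cancel₀ _ (ht0 n)]
    have h2 : |s / t n - ⌊s / t n⌋| ≤ 1 := by
      have hf1 := Int.floor_le (s / t n)
      have hf2 := Int.lt_floor_add_one (s / t n)
      rw [abs_le]
      constructor <;> linarith
    calc |r n| = |t n| * |s / t n - ⌊s / t n⌋| := by rw [h1, abs_mul]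
    _ ≤ (1 / (n + 1)) * 1 := by
        apply mul_le_mul (htle n) h2 (abs_nonneg _)
        positivity
    _ = 1 / (n + 1) := by ring
  have hrto : Tendsto (fun n => r (k n)) atTop (𝓝 0) := by
    have h1 : Tendsto (fun n : ℕ => 1 / ((n : ℝ) + 1)) atTop (𝓝 0) :=
      tendsto_one_div_add_atTop_nhds_zero_nat
    have h2 : Tendsto (fun n => 1 / ((k n : ℝ) + 1)) atTop (𝓝 0) :=
      h1.comp hk.tendsto_atTop
    refine squeeze_zero_norm (fun n => ?_) h2
    simpa using hrbound (k n)
  have hto1 : Tendsto (fun n => φ (r (k n)) (x (k n))) atTop (𝓝 a) := by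
    have : Tendsto (fun n => ((x (k n), r (k n)) : X × ℝ)) atTop (𝓝 (a, 0)) :=
      hka.prodMk_nhds hrto
    have := (hφ.1.tendsto (a, 0)).comp this
    simpa [hφ.2.1, Function.comp_def] using this
  have hto2 : Tendsto (fun n => φ s (x (k n))) atTop (𝓝 (φ s a)) := by
    have : Tendsto (fun n => ((x (k n), s) : X × ℝ)) atTop (𝓝 (a, s)) :=
      hka.prodMk_nhds tendsto_const_nhds
    exact (hφ.1.tendsto (a, s)).comp this
  have : Tendsto (fun n => φ s (x (k n))) atTop (𝓝 a) := by
    simpa [fun n => hrs (k n)] using hto1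
  exact tendsto_nhds_unique hto2 this

lemma exists_delta [MetricSpace X] [CompactSpace X] [Nonempty X]
    {φ : ℝ → X → X} (hφ : IsFlow φ) {t₀ ρ : ℝ} (h0 : 0 < ρ) (hle : ρ ≤ t₀)
    (hper : ∀ x : X, ∀ t : ℝ, t ≠ 0 → |t| ≤ t₀ → φ t x ≠ x) :
    ∃ δ > 0, ∀ (x : X) (t : ℝ), ρ ≤ |t| → |t| ≤ t₀ → δ ≤ dist (φ t x) x := by
  set T : Set ℝ := {t | ρ ≤ |t| ∧ |t| ≤ t₀} with hT
  have hTc : IsCompact T := by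
    apply isCompact_Icc (a := -t₀) (b := t₀) |>.of_isClosed_subset
    · exact (isClosed_le continuous_const continuous_abs).inter
        (isClosed_le continuous_abs continuous_const)
    · intro u hu
      rw [mem_Icc, ← abs_le]
      exact hu.2
  have hKc : IsCompact ((univ : Set X) ×ˢ T) := isCompact_univ.prod hTc
  have hne : ((univ : Set X) ×ˢ T).Nonempty := by
    refine ⟨(Classical.arbitrary X, ρ), mem_univ _, ?_⟩
    simp [hT, abs_of_pos h0, hle, le_refl]
  have hfc : Continuous (fun p : X × ℝ => dist (φ p.2 p.1) p.1) :=
    hφ.1.dist continuous_fst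
  obtain ⟨p, hpK, hmin⟩ := hKc.exists_isMinOn hne hfc.continuousOn
  refine ⟨dist (φ p.2 p.1) p.1, ?_, fun x u h1 h2 => isMinOn_iff.mp hmin (x, u) ⟨mem_univ _, h1, h2⟩⟩
  simp only [gt_iff_lt, dist_pos]
  apply hper
  · intro h
    have h2 := hpK.2.1
    rw [h] at h2
    simp at h2
    linarith
  · exact hpK.2.2

lemma exists_theta_ucont [MetricSpace X] [CompactSpace X]
    {φ : ℝ → X → X} (hφ : IsFlow φ) (t₀ ε : ℝ) (hε : 0 < ε) :
    ∃ θ > 0, ∀ (z w : X) (s : ℝ), |s| ≤ t₀ → dist z w < θ →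
      dist (φ s z) (φ s w) < ε := by
  have hS : IsCompact ((univ : Set X) ×ˢ Icc (-t₀) t₀) := isCompact_univ.prod isCompact_Icc
  have huc : UniformContinuousOn (fun p : X × ℝ => φ p.2 p.1)
      ((univ : Set X) ×ˢ Icc (-t₀) t₀) :=
    hS.uniformContinuousOn_of_continuous hφ.1.continuousOn
  rw [Metric.uniformContinuousOn_iff] at huc
  obtain ⟨θ, hθ, h⟩ := huc ε hε
  refine ⟨θ, hθ, fun z w s hs hzw => ?_⟩
  have hs' : s ∈ Icc (-t₀) t₀ := by rw [mem_Icc, ← abs_le]; exact hs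
  have := h (z, s) ⟨mem_univ _, hs'⟩ (w, s) ⟨mem_univ _, hs'⟩ ?_
  · exact this
  · rw [Prod.dist_eq]
    simp only [dist_self, max_lt_iff]
    exact ⟨hzw, hθ⟩

/-- the reparametrization-distortion lemma for fixed-point free flows. -/
theorem distortion_lemma [MetricSpace X] [CompactSpace X]
    (φ : ℝ → X → X) (hφ : IsFlow φ) (hfpf : FixedPointFree φ)
    (η : ℝ) (hη : 0 < η) :
    ∃ θ > 0, ∀ (x y : X) (a b : ℝ), a ≤ 0 → 0 ≤ b → ∀ α : ℝ → ℝ,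
      IsRepOn (Set.Icc a b) α →
      (∀ s ∈ Set.Icc a b, dist (φ (α s) x) (φ s y) < θ) →
      ∀ s ∈ Set.Icc a b,
        (1 < |s| → |α s - s| < η * |s|) ∧ (|s| ≤ 1 → |α s - s| < η) := by
  rcases isEmpty_or_nonempty X with hX | hX
  · exact ⟨1, one_pos, fun x => isEmptyElim x⟩
  obtain ⟨t₁, ht₁, hper₁⟩ := exists_no_small_period hφ hfpf
  set t₀ : ℝ := min t₁ 1 with ht₀def
  have ht₀ : 0 < t₀ := lt_min ht₁ one_pos
  have ht₀1 : t₀ ≤ 1 := min_le_right _ _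
  have hper : ∀ x : X, ∀ t : ℝ, t ≠ 0 → |t| ≤ t₀ → φ t x ≠ x :=
    fun x t h1 h2 => hper₁ x t h1 (h2.trans (min_le_left _ _))
  set η' : ℝ := min η 1 with hη'def
  have hη' : 0 < η' := lt_min hη one_pos
  have hη'1 : η' ≤ 1 := min_le_right _ _
  have hη'η : η' ≤ η := min_le_left _ _
  set ρ : ℝ := η' * t₀ / 4 with hρdef
  have hρ : 0 < ρ := by positivity
  have hρt₀ : ρ ≤ t₀ := by nlinarith
  obtain ⟨δ, hδ, hdist⟩ := exists_delta hφ hρ hρt₀ hper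
  obtain ⟨θ₁, hθ₁, hUC⟩ := exists_theta_ucont hφ t₀ (δ / 4) (by positivity)
  refine ⟨min θ₁ (δ / 4), lt_min hθ₁ (by positivity), ?_⟩
  intro x y a b ha hb α hα hclose
  -- the key step: small increments are nearly preserved
  have key : ∀ s ∈ Icc a b, ∀ s' ∈ Icc a b, |s' - s| ≤ t₀ →
      |α s' - α s - (s' - s)| ≤ t₀ → |α s' - α s - (s' - s)| < ρ := by
    intro s hs s' hs' hu hvu
    by_contra hge
    push_neg at hge
    set u : ℝ := s' - s with hudef
    set v : ℝ := α s' - α s with hvdef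
    have h1 : dist (φ (α s) x) (φ s y) < min θ₁ (δ / 4) := hclose s hs
    have h2 : dist (φ (α s') x) (φ s' y) < min θ₁ (δ / 4) := hclose s' hs'
    have e2 : φ s' y = φ u (φ s y) := by
      rw [← hφ.2.2]; congr 1; simp [hudef]
    have h3 : dist (φ u (φ (α s) x)) (φ u (φ s y)) < δ / 4 :=
      hUC _ _ u hu (h1.trans_le (min_le_left _ _))
    have eW : φ (v - u) (φ u (φ (α s) x)) = φ (α s') x := by
      rw [← hφ.2.2, ← hφ.2.2]
      congr 1
      simp only [hudef, hvdef]
      ring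
    have h4 : dist (φ (v - u) (φ u (φ (α s) x))) (φ u (φ (α s) x)) < δ := by
      rw [eW]
      calc dist (φ (α s') x) (φ u (φ (α s) x))
          ≤ dist (φ (α s') x) (φ s' y) + dist (φ s' y) (φ u (φ (α s) x)) :=
            dist_triangle _ _ _
        _ = dist (φ (α s') x) (φ s' y) + dist (φ u (φ s y)) (φ u (φ (α s) x)) := by
            rw [e2]
        _ = dist (φ (α s') x) (φ s' y) + dist (φ u (φ (α s) x)) (φ u (φ s y)) := by
            rw [dist_comm (φ u (φ s y))]
        _ < min θ₁ (δ / 4) + δ / 4 := by linarith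
        _ ≤ δ / 4 + δ / 4 := by have := min_le_right θ₁ (δ / 4); linarith
        _ < δ := by linarith
    exact absurd (hdist (φ u (φ (α s) x)) (v - u) hge hvu) (not_le.mpr h4)
  -- upgrade: no a priori bound needed, by the intermediate value theorem
  have step : ∀ s ∈ Icc a b, ∀ s' ∈ Icc a b, |s' - s| ≤ t₀ →
      |α s' - α s - (s' - s)| < ρ := by
    intro s hs s' hs' hu
    by_contra hge
    push_neg at hge
    set g : ℝ → ℝ := fun r => |α r - α s - (r - s)| with hgdef
    have hsub : uIcc s s' ⊆ Icc a b := uIcc_subset_Icc hs hs'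
    have hgc : ContinuousOn g (uIcc s s') := by
      apply ContinuousOn.abs
      exact ((hα.1.mono hsub).sub continuousOn_const).sub
        ((continuous_id.sub continuous_const).continuousOn)
    have hmem : ρ ∈ uIcc (g s) (g s') := by
      have hgs : g s = 0 := by simp [hgdef]
      rw [hgs]
      rw [Set.mem_uIcc]
      exact Or.inl ⟨hρ.le, hge⟩
    obtain ⟨r, hr, hgr⟩ := intermediate_value_uIcc hgc hmem
    have hrs : |r - s| ≤ t₀ := by
      rw [abs_le] at hu ⊢
      rcases Set.mem_uIcc.1 hr with ⟨p1, p2⟩ | ⟨p1, p2⟩ <;> constructor <;> linarith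
    have hlt := key s hs r (hsub hr) hrs (by rw [show |α r - α s - (r - s)| = g r from rfl, hgr]; exact hρt₀)
    rw [show |α r - α s - (r - s)| = g r from rfl, hgr] at hlt
    exact absurd hlt (lt_irrefl ρ)
  -- now chain small steps
  intro s hs
  by_cases hs0 : s = 0
  · subst hs0
    refine ⟨fun h => absurd h (by norm_num), fun _ => ?_⟩
    simpa [hα.2.2] using hη
  have hsabs : 0 < |s| := abs_pos.mpr hs0
  set n : ℕ := ⌈|s| / t₀⌉₊ with hndef
  have hn1 : 1 ≤ n := Nat.one_le_ceil_iff.mpr (by positivity)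
  have hnpos : (0 : ℝ) < n := by exact_mod_cast hn1
  set c : ℕ → ℝ := fun k => (k : ℝ) * s / n with hcdef
  have hc0 : c 0 = 0 := by simp [hcdef]
  have hcn : c n = s := by simp only [hcdef]; exact mul_div_cancel_left₀ s hnpos.ne'
  have hck : ∀ k : ℕ, k ≤ n → c k ∈ Icc a b := by
    intro k hk
    have hkn : (k : ℝ) ≤ n := by exact_mod_cast hk
    have hk0 : (0 : ℝ) ≤ k := Nat.cast_nonneg k
    rcases le_or_gt 0 s with hpos | hneg
    · have h1 : 0 ≤ c k := by positivity
      have h2 : c k ≤ s := by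
        rw [hcdef, div_le_iff₀ hnpos]
        nlinarith
      exact ⟨ha.trans h1, h2.trans hs.2⟩
    · have h1 : c k ≤ 0 := by
        rw [hcdef]
        apply div_nonpos_of_nonpos_of_nonneg _ hnpos.le
        nlinarith
      have h2 : s ≤ c k := by
        rw [hcdef, le_div_iff₀ hnpos]
        nlinarith
      exact ⟨hs.1.trans h2, h1.trans hb⟩
  have hgap : ∀ k : ℕ, |c (k + 1) - c k| ≤ t₀ := by
    intro k
    have e : c (k + 1) - c k = s / n := by
      rw [hcdef]
      push_cast
      ring
    rw [e, abs_div, abs_of_pos hnpos, div_le_iff₀ hnpos]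
    have := Nat.le_ceil (|s| / t₀)
    rw [← hndef] at this
    rw [div_le_iff₀ ht₀] at this
    linarith
  have htel : α s - s = ∑ k ∈ Finset.range n,
      ((α (c (k + 1)) - c (k + 1)) - (α (c k) - c k)) := by
    rw [Finset.sum_range_sub (f := fun k => α (c k) - c k)]
    rw [hc0, hcn, hα.2.2]
    ring
  have hsum : |α s - s| < n * ρ := by
    rw [htel]
    calc |∑ k ∈ Finset.range n, ((α (c (k + 1)) - c (k + 1)) - (α (c k) - c k))|
        ≤ ∑ k ∈ Finset.range n, |(α (c (k + 1)) - c (k + 1)) - (α (c k) - c k)| :=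
          Finset.abs_sum_le_sum_abs _ _
      _ < ∑ _k ∈ Finset.range n, ρ := by
          apply Finset.sum_lt_sum_of_nonempty
          · exact Finset.nonempty_range_iff.mpr (by omega)
          · intro k hk
            rw [Finset.mem_range] at hk
            have e : (α (c (k + 1)) - c (k + 1)) - (α (c k) - c k)
                = α (c (k + 1)) - α (c k) - (c (k + 1) - c k) := by ring
            rw [e]
            exact step (c k) (hck k (by omega)) (c (k + 1)) (hck (k + 1) (by omega)) (hgap k)
      _ = n * ρ := by
          rw [Finset.sum_const, Finset.card_range, nsmul_eq_mul]
  have hnle : (n : ℝ) * t₀ ≤ |s| + t₀ := by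
    have h1 : (n : ℝ) < |s| / t₀ + 1 := Nat.ceil_lt_add_one (by positivity)
    rw [div_add_one ht₀.ne', lt_div_iff₀ ht₀] at h1
    linarith
  have e : (n : ℝ) * ρ = (n : ℝ) * t₀ * η' / 4 := by rw [hρdef]; ring
  have hA : (n : ℝ) * t₀ * η' ≤ (|s| + t₀) * η' :=
    mul_le_mul_of_nonneg_right hnle hη'.le
  constructor
  · intro h1s
    have hB : 0 ≤ (|s| - t₀) * η' := mul_nonneg (by linarith) hη'.le
    have hC : 0 < |s| * η' := mul_pos (by linarith) hη'
    have hD : |s| * η' ≤ |s| * η := mul_le_mul_of_nonneg_left hη'η (abs_nonneg s)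
    linarith [hsum, hA, hB, hC, hD, e]
  · intro h1s
    have hB : |s| * η' ≤ 1 * η' := mul_le_mul_of_nonneg_right h1s hη'.le
    have hC : t₀ * η' ≤ 1 * η' := mul_le_mul_of_nonneg_right ht₀1 hη'.le
    linarith [hsum, hA, hB, hC, e, hη', hη'η]
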